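/- If f ∈ ℝ[x,y] is a polynomial of degree n whose degree-n homogeneous part f_n is elliptic (i.e., Hess f_n ≥ 0 everywhere and Hess f_n vanishes only at the origin), then the Hessian curve {(x,y) ∈ ℝ² : Hess f(x,y) = 0} is compact, and there exists R > 0 such that Hess f(x,y) > 0 whenever x² + y² > R². -/

import Mathlib

open MvPolynomial Finsupp

/-- The Hessian determinant `f_xx f_yy - f_xy ^ 2` of a polynomial in two variables. -/
noncomputable def Hess (P : MvPolynomial (Fin 2) ℝ) : MvPolynomial (Fin 2) ℝ :=
  pderiv 0 (pderiv 0 P) * pderiv 1 (pderiv 1 P) - (pderiv 0 (pderiv 1 P)) ^ 2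

lemma my_pderiv_isHomogeneous {k : ℕ} {φ : MvPolynomial (Fin 2) ℝ}
    (h : φ.IsHomogeneous k) (i : Fin 2) : (pderiv i φ).IsHomogeneous (k - 1) := by
  conv_lhs => rw [φ.as_sum, map_sum]
  apply IsHomogeneous.sum
  intro d hd
  rw [pderiv_monomial]
  rcases Nat.eq_zero_or_pos (d i) with h0 | h0
  · simp only [h0, Nat.cast_zero, mul_zero, monomial_zero]
    exact isHomogeneous_zero _ _ _
  · apply isHomogeneous_monomial
    have hk : d.degree = k := by
      rw [degree_eq_weight_one]; exact h (MvPolynomial.mem_support_iff.mp hd)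
    have hle : Finsupp.single i 1 ≤ d := by
      rw [Finsupp.single_le_iff]; exact h0
    have hdd : d = (d - Finsupp.single i 1) + Finsupp.single i 1 := (tsub_add_cancel_of_le hle).symm
    have : d.degree = (d - Finsupp.single i 1).degree + 1 := by
      conv_lhs => rw [hdd]
      simp [degree_eq_weight_one, map_add, Finsupp.weight_apply, Finsupp.sum_single_index]
    omega

lemma my_eval_smul {k : ℕ} {φ : MvPolynomial (Fin 2) ℝ} (h : φ.IsHomogeneous k)
    (c : ℝ) (v : Fin 2 → ℝ) : eval (c • v) φ = c ^ k * eval v φ := by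
  rw [eval_eq, eval_eq, Finset.mul_sum]
  apply Finset.sum_congr rfl
  intro d hd
  have hk : d.degree = k := by
    rw [degree_eq_weight_one]; exact h (MvPolynomial.mem_support_iff.mp hd)
  have : ∏ i ∈ d.support, (c • v) i ^ d i
      = c ^ d.degree * ∏ i ∈ d.support, v i ^ d i := by
    rw [Finsupp.degree_apply, ← Finset.prod_pow_eq_pow_sum, ← Finset.prod_mul_distrib]
    apply Finset.prod_congr rfl
    intro i _
    rw [Pi.smul_apply, smul_eq_mul, mul_pow]
  rw [this, hk]; ring

lemma my_eval_bound (p : MvPolynomial (Fin 2) ℝ) (d : ℕ) (hp : p.totalDegree ≤ d) :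
    ∃ C : ℝ, 0 ≤ C ∧ ∀ v : Fin 2 → ℝ, |eval v p| ≤ C * (1 + ‖v‖) ^ d := by
  refine ⟨∑ m ∈ p.support, |coeff m p|, Finset.sum_nonneg fun _ _ => abs_nonneg _, fun v => ?_⟩
  have h1 : (0:ℝ) ≤ 1 + ‖v‖ := by positivity
  rw [eval_eq, Finset.sum_mul]
  refine (Finset.abs_sum_le_sum_abs _ _).trans (Finset.sum_le_sum fun m hm => ?_)
  rw [abs_mul]
  apply mul_le_mul_of_nonneg_left _ (abs_nonneg _)
  calc |∏ i ∈ m.support, v i ^ m i| ≤ ∏ i ∈ m.support, (1 + ‖v‖) ^ m i := by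
          rw [Finset.abs_prod]
          apply Finset.prod_le_prod (fun _ _ => abs_nonneg _)
          intro i _
          rw [abs_pow]
          exact pow_le_pow_left₀ (abs_nonneg _) ((norm_le_pi_norm v i).trans (by linarith)) _
      _ = (1 + ‖v‖) ^ m.degree := by rw [Finsupp.degree_apply, Finset.prod_pow_eq_pow_sum]
      _ ≤ (1 + ‖v‖) ^ d := by
          apply pow_le_pow_right₀ (by linarith [norm_nonneg v])
          exact le_trans (MvPolynomial.le_totalDegree hm) hp

lemma my_totalDegree_pderiv_le (p : MvPolynomial (Fin 2) ℝ) (i : Fin 2) {d : ℕ}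
    (hp : p.totalDegree ≤ d) : (pderiv i p).totalDegree ≤ d - 1 := by
  have hrw : pderiv i p
      = ∑ j ∈ Finset.range (p.totalDegree + 1), pderiv i (homogeneousComponent j p) := by
    rw [← map_sum, sum_homogeneousComponent]
  rw [hrw]
  refine (totalDegree_finset_sum _ _).trans (Finset.sup_le fun j hj => ?_)
  refine ((my_pderiv_isHomogeneous (homogeneousComponent_isHomogeneous j p) i).totalDegree_le).trans ?_
  simp only [Finset.mem_range] at hj
  omega

lemma my_hess_isHomogeneous {n : ℕ} (hn : 3 ≤ n) {g : MvPolynomial (Fin 2) ℝ}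
    (hg : g.IsHomogeneous n) : (Hess g).IsHomogeneous (2 * n - 4) := by
  have h0 : ∀ i j : Fin 2, (pderiv i (pderiv j g)).IsHomogeneous (n - 2) := by
    intro i j
    have := my_pderiv_isHomogeneous (my_pderiv_isHomogeneous hg j) i
    simpa [Nat.sub_sub] using this
  have hmul : (pderiv 0 (pderiv 0 g) * pderiv 1 (pderiv 1 g)).IsHomogeneous ((n-2)+(n-2)) :=
    (h0 0 0).mul (h0 1 1)
  have hsq : ((pderiv 0 (pderiv 1 g)) ^ 2).IsHomogeneous ((n-2)*2) := (h0 0 1).pow 2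
  have he1 : (n-2)+(n-2) = 2*n-4 := by omega
  have he2 : (n-2)*2 = 2*n-4 := by omega
  rw [he1] at hmul; rw [he2] at hsq
  rw [← mem_homogeneousSubmodule] at hmul hsq ⊢
  exact Submodule.sub_mem _ hmul hsq

lemma my_hess_sub_deg {n : ℕ} (hn : 3 ≤ n) (f : MvPolynomial (Fin 2) ℝ)
    (hdeg : f.totalDegree = n) :
    (Hess f - Hess (homogeneousComponent n f)).totalDegree ≤ 2 * n - 5 := by
  set g := homogeneousComponent n f with hgdef
  set r := f - g with hrdef
  have hfr : f = g + r := by rw [hrdef]; ring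
  have hrdeg : r.totalDegree ≤ n - 1 := by
    have hs := sum_homogeneousComponent f
    rw [hdeg, Finset.sum_range_succ] at hs
    have hsum : r = ∑ i ∈ Finset.range n, homogeneousComponent i f := by
      rw [hrdef, hgdef]; linear_combination -hs
    rw [hsum]
    refine (totalDegree_finset_sum _ _).trans (Finset.sup_le fun i hi => ?_)
    refine (homogeneousComponent_isHomogeneous i f).totalDegree_le.trans ?_
    simp only [Finset.mem_range] at hi; omega
  have hg' : ∀ i j : Fin 2, (pderiv i (pderiv j g)).totalDegree ≤ n - 2 := by
    intro i j
    have := my_pderiv_isHomogeneous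
      (my_pderiv_isHomogeneous (homogeneousComponent_isHomogeneous n f) j) i
    exact this.totalDegree_le.trans (by omega)
  have hr' : ∀ i j : Fin 2, (pderiv i (pderiv j r)).totalDegree ≤ n - 3 := by
    intro i j
    have h1 := my_totalDegree_pderiv_le r j hrdeg
    have h2 := my_totalDegree_pderiv_le _ i h1
    exact h2.trans (by omega)
  have hexp : Hess f - Hess g =
      pderiv 0 (pderiv 0 g) * pderiv 1 (pderiv 1 r)
      + pderiv 0 (pderiv 0 r) * pderiv 1 (pderiv 1 g)
      + pderiv 0 (pderiv 0 r) * pderiv 1 (pderiv 1 r)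
      - (pderiv 0 (pderiv 1 g) * pderiv 0 (pderiv 1 r)
        + pderiv 0 (pderiv 1 g) * pderiv 0 (pderiv 1 r) + (pderiv 0 (pderiv 1 r)) ^ 2) := by
    rw [Hess, Hess]
    conv_lhs => rw [hfr]
    simp only [map_add]
    ring
  rw [hexp]
  refine (totalDegree_sub _ _).trans (max_le ?_ ?_)
  · refine (totalDegree_add _ _).trans (max_le ((totalDegree_add _ _).trans (max_le ?_ ?_)) ?_)
    · exact (totalDegree_mul _ _).trans (by have := hg' 0 0; have := hr' 1 1; omega)
    · exact (totalDegree_mul _ _).trans (by have := hr' 0 0; have := hg' 1 1; omega)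
    · exact (totalDegree_mul _ _).trans (by have := hr' 0 0; have := hr' 1 1; omega)
  · refine (totalDegree_add _ _).trans (max_le ((totalDegree_add _ _).trans (max_le ?_ ?_)) ?_)
    · exact (totalDegree_mul _ _).trans (by have := hg' 0 1; have := hr' 0 1; omega)
    · exact (totalDegree_mul _ _).trans (by have := hg' 0 1; have := hr' 0 1; omega)
    · exact (totalDegree_pow _ _).trans (by have := hr' 0 1; omega)

/-- If the leading homogeneous part `f_n` of `f` is elliptic (its Hessian is
nonnegative everywhere and vanishes only at the origin), then the Hessian curve
of `f` is compact and `Hess f > 0` outside a large disc. -/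
theorem hessian_curve_compact_of_elliptic (n : ℕ) (hn : 3 ≤ n)
    (f : MvPolynomial (Fin 2) ℝ) (hdeg : f.totalDegree = n)
    (hNonneg : ∀ v : Fin 2 → ℝ, 0 ≤ eval v (Hess (homogeneousComponent n f)))
    (hOnlyOrigin : ∀ v : Fin 2 → ℝ, eval v (Hess (homogeneousComponent n f)) = 0 → v = 0) :
    IsCompact {v : Fin 2 → ℝ | eval v (Hess f) = 0} ∧
      ∃ R : ℝ, 0 < R ∧ ∀ x y : ℝ, x ^ 2 + y ^ 2 > R ^ 2 → 0 < eval ![x, y] (Hess f) := by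
  set g := homogeneousComponent n f with hgdef
  have hg := homogeneousComponent_isHomogeneous n f
  have hH := my_hess_isHomogeneous hn hg
  set k := 2 * n - 5 with hk
  have hk1 : 2 * n - 4 = k + 1 := by omega
  rw [hk1] at hH
  have hpos : ∀ v : Fin 2 → ℝ, v ≠ 0 → 0 < eval v (Hess g) := by
    intro v hv
    rcases lt_or_eq_of_le (hNonneg v) with h | h
    · exact h
    · exact absurd (hOnlyOrigin v h.symm) hv
  have hcomp : IsCompact (Metric.sphere (0 : Fin 2 → ℝ) 1) := isCompact_sphere _ _
  have hne : (Metric.sphere (0 : Fin 2 → ℝ) 1).Nonempty :=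
    NormedSpace.sphere_nonempty.2 zero_le_one
  obtain ⟨v₀, hv₀, hmin⟩ := hcomp.exists_isMinOn hne
    (MvPolynomial.continuous_eval (p := Hess g)).continuousOn
  set c := eval v₀ (Hess g) with hc
  have hv₀ne : v₀ ≠ 0 := by
    intro h; rw [Metric.mem_sphere] at hv₀; simp [h] at hv₀
  have hcpos : 0 < c := hpos v₀ hv₀ne
  have hlow : ∀ v : Fin 2 → ℝ, c * ‖v‖ ^ (k + 1) ≤ eval v (Hess g) := by
    intro v
    rcases eq_or_ne v 0 with rfl | hv
    · simpa using hNonneg 0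
    · have hnv : 0 < ‖v‖ := norm_pos_iff.2 hv
      set u := ‖v‖⁻¹ • v with hu
      have hun : u ∈ Metric.sphere (0 : Fin 2 → ℝ) 1 := by
        simp [hu, norm_smul, abs_of_pos (inv_pos.2 hnv), inv_mul_cancel₀ hnv.ne']
      have hvu : v = ‖v‖ • u := by
        rw [hu, smul_smul, mul_inv_cancel₀ hnv.ne', one_smul]
      calc c * ‖v‖ ^ (k + 1) ≤ eval u (Hess g) * ‖v‖ ^ (k + 1) :=
            mul_le_mul_of_nonneg_right ((isMinOn_iff.1 hmin) u hun) (pow_nonneg hnv.le _)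
        _ = eval v (Hess g) := by
            have hes : eval (‖v‖ • u) (Hess g) = ‖v‖ ^ (k + 1) * eval u (Hess g) :=
              my_eval_smul hH _ _
            rw [← hvu] at hes
            rw [hes]; ring
  obtain ⟨C, hC0, hCb⟩ := my_eval_bound (Hess f - Hess g) k (my_hess_sub_deg hn f hdeg)
  set R₀ : ℝ := 1 + C * 2 ^ k / c with hR₀
  have hq : (0:ℝ) ≤ C * 2 ^ k / c := by positivity
  have hR₀pos : 0 < R₀ := by positivity
  have hkey : ∀ v : Fin 2 → ℝ, R₀ < ‖v‖ → 0 < eval v (Hess f) := by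
    intro v hv
    have hR₀1 : (1:ℝ) ≤ R₀ := by rw [hR₀]; linarith
    have h1 : (1:ℝ) ≤ ‖v‖ := by linarith
    have hE := hCb v
    have hsplit : eval v (Hess f) = eval v (Hess g) + eval v (Hess f - Hess g) := by
      rw [map_sub]; ring
    have h2 : (1 + ‖v‖) ^ k ≤ (2 * ‖v‖) ^ k := by
      apply pow_le_pow_left₀ (by linarith) (by linarith)
    have h3 : |eval v (Hess f - Hess g)| ≤ C * (2 * ‖v‖) ^ k :=
      hE.trans (mul_le_mul_of_nonneg_left h2 hC0)
    have h4 : c * ‖v‖ ^ (k + 1) ≤ eval v (Hess g) := hlow v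
    have h5 : c * ‖v‖ > c + C * 2 ^ k := by
      have hcr : c * R₀ = c + C * 2 ^ k := by
        rw [hR₀]; field_simp
      nlinarith
    rw [hsplit]
    have habs := (abs_le.1 h3).1
    have hvpos : 0 < ‖v‖ := by linarith
    have hpk : 0 < ‖v‖ ^ k := pow_pos hvpos k
    have hmp : (2 * ‖v‖) ^ k = 2 ^ k * ‖v‖ ^ k := by rw [mul_pow]
    have hps : ‖v‖ ^ (k + 1) = ‖v‖ ^ k * ‖v‖ := pow_succ _ _
    nlinarith [mul_pos hpk hcpos]
  refine ⟨?_, 2 * R₀ + 1, by linarith, ?_⟩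
  · rw [Metric.isCompact_iff_isClosed_bounded]
    constructor
    · exact isClosed_eq (MvPolynomial.continuous_eval _) continuous_const
    · apply (Metric.isBounded_closedBall (x := (0 : Fin 2 → ℝ)) (r := R₀)).subset
      intro v hv
      simp only [Set.mem_setOf_eq] at hv
      by_contra hb
      simp only [Metric.mem_closedBall, dist_zero_right, not_le] at hb
      exact (hkey v hb).ne' hv
  · intro x y hxy
    apply hkey
    have hx : |x| ≤ ‖![x, y]‖ := by simpa using norm_le_pi_norm ![x, y] 0
    have hy : |y| ≤ ‖![x, y]‖ := by simpa using norm_le_pi_norm ![x, y] 1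
    nlinarith [norm_nonneg ![x, y], abs_nonneg x, abs_nonneg y, sq_abs x, sq_abs y, hR₀pos,
      mul_self_le_mul_self (abs_nonneg x) hx, mul_self_le_mul_self (abs_nonneg y) hy]
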